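/- Let b₁,…,b_p ∈ X be orthonormal and B = b₁∧⋯∧b_p. Let P : X → X be the orthogonal projection onto span{b₁,…,b_p} and P⊥ : X → X the orthogonal projection onto its orthogonal complement, with ⋀P, ⋀P⊥ : ⋀X → ⋀X the induced algebra homomorphisms (outermorphisms). Then for every M ∈ ⋀X: (B⌞M)⌟B = ⋀P(M) and B⌟(B∧M) = ⋀P⊥(M). -/

import Mathlib

open scoped RealInnerProductSpace

/-- The blade `v₁ ∧ ⋯ ∧ v_k` in the exterior algebra. -/
noncomputable def expBlade {X : Type*} [AddCommGroup X] [Module ℝ X] {k : ℕ}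
    (v : Fin k → X) : ExteriorAlgebra ℝ X :=
  (List.ofFn fun i => ExteriorAlgebra.ι ℝ (v i)).prod

/-- The blade associated to a list of vectors. -/
noncomputable def bladeL {X : Type*} [AddCommGroup X] [Module ℝ X] (l : List X) :
    ExteriorAlgebra ℝ X := (l.map (ExteriorAlgebra.ι ℝ)).prod

lemma bladeL_nil {X : Type*} [AddCommGroup X] [Module ℝ X] :
    bladeL ([] : List X) = 1 := rfl

lemma bladeL_cons {X : Type*} [AddCommGroup X] [Module ℝ X] (v : X) (l : List X) :
    bladeL (v :: l) = ExteriorAlgebra.ι ℝ v * bladeL l := by simp [bladeL]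

/-- Iterated application of `M ↦ M - u ∧ (u ⌟ M)`. -/
noncomputable def FpL {X : Type*} [AddCommGroup X] [Module ℝ X]
    (lc : X → ExteriorAlgebra ℝ X →ₗ[ℝ] ExteriorAlgebra ℝ X) :
    List X → ExteriorAlgebra ℝ X → ExteriorAlgebra ℝ X
  | [], M => M
  | u :: l, M => FpL lc l (M - ExteriorAlgebra.ι ℝ u * lc u M)

/-- Iterated application of `v ↦ v - ⟪u,v⟫u`. -/
noncomputable def ppL {X : Type*} [NormedAddCommGroup X] [InnerProductSpace ℝ X] :
    List X → X → X
  | [], v => v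
  | u :: l, v => ppL l (v - ⟪u, v⟫ • u)

set_option maxHeartbeats 4000000 in
theorem stmt6 {X : Type*} [NormedAddCommGroup X] [InnerProductSpace ℝ X] [FiniteDimensional ℝ X]
    -- the grade involution: the unique algebra automorphism with `v̂ = -v` on vectors
    (ginv : ExteriorAlgebra ℝ X →ₐ[ℝ] ExteriorAlgebra ℝ X)
    (hginv : ∀ v : X, ginv (ExteriorAlgebra.ι ℝ v) = - ExteriorAlgebra.ι ℝ v)
    -- the left contraction by a vector, characterized by its defining properties
    (lc : X → ExteriorAlgebra ℝ X →ₗ[ℝ] ExteriorAlgebra ℝ X)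
    (hlc_one : ∀ v : X, lc v 1 = 0)
    (hlc_vec : ∀ v w : X, lc v (ExteriorAlgebra.ι ℝ w) = algebraMap ℝ (ExteriorAlgebra ℝ X) ⟪v, w⟫)
    (hlc_mul : ∀ (v : X) (M N : ExteriorAlgebra ℝ X),
      lc v (M * N) = lc v M * N + ginv M * lc v N)
    -- the right contraction by a vector `N ↦ N⌞v`, characterized by its defining properties
    (rc : X → ExteriorAlgebra ℝ X →ₗ[ℝ] ExteriorAlgebra ℝ X)
    (hrc_one : ∀ v : X, rc v 1 = 0)
    (hrc_vec : ∀ v w : X, rc v (ExteriorAlgebra.ι ℝ w) = algebraMap ℝ (ExteriorAlgebra ℝ X) ⟪v, w⟫)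
    (hrc_mul : ∀ (v : X) (M N : ExteriorAlgebra ℝ X),
      rc v (M * N) = M * rc v N + rc v M * ginv N)
    -- the left contraction `LC M N = M ⌟ N`, extended (bi)linearly in the contractor `M`
    (LC : ExteriorAlgebra ℝ X →ₗ[ℝ] ExteriorAlgebra ℝ X →ₗ[ℝ] ExteriorAlgebra ℝ X)
    (hLC_one : ∀ N : ExteriorAlgebra ℝ X, LC 1 N = N)
    (hLC_vec : ∀ (v : X) (N : ExteriorAlgebra ℝ X), LC (ExteriorAlgebra.ι ℝ v) N = lc v N)
    (hLC_mul : ∀ (v : X) (M N : ExteriorAlgebra ℝ X),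
      LC (ExteriorAlgebra.ι ℝ v * M) N = LC M (lc v N))
    -- the right contraction `RC N M = N ⌞ M` (contractee `N`, contractor `M`),
    -- extended (bi)linearly in the contractor `M`
    (RC : ExteriorAlgebra ℝ X →ₗ[ℝ] ExteriorAlgebra ℝ X →ₗ[ℝ] ExteriorAlgebra ℝ X)
    (hRC_one : ∀ N : ExteriorAlgebra ℝ X, RC N 1 = N)
    (hRC_vec : ∀ (v : X) (N : ExteriorAlgebra ℝ X), RC N (ExteriorAlgebra.ι ℝ v) = rc v N)
    (hRC_mul : ∀ (v : X) (M N : ExteriorAlgebra ℝ X),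
      RC N (ExteriorAlgebra.ι ℝ v * M) = rc v (RC N M))
    {p : ℕ} (b : Fin p → X) (hb : Orthonormal ℝ b)
    -- `P` is the orthogonal projection onto `span{b₁,…,b_p}`
    (P : X →ₗ[ℝ] X)
    (hP : ∀ x : X, P x ∈ Submodule.span ℝ (Set.range b) ∧
      x - P x ∈ (Submodule.span ℝ (Set.range b))ᗮ)
    -- `Pperp` is the orthogonal projection onto the orthogonal complement
    (Pperp : X →ₗ[ℝ] X)
    (hPperp : ∀ x : X, Pperp x ∈ (Submodule.span ℝ (Set.range b))ᗮ ∧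
      x - Pperp x ∈ Submodule.span ℝ (Set.range b))
    -- the induced outermorphisms (algebra homomorphisms extending `P` and `Pperp`)
    (ΛP ΛPperp : ExteriorAlgebra ℝ X →ₐ[ℝ] ExteriorAlgebra ℝ X)
    (hΛP : ∀ v : X, ΛP (ExteriorAlgebra.ι ℝ v) = ExteriorAlgebra.ι ℝ (P v))
    (hΛPperp : ∀ v : X, ΛPperp (ExteriorAlgebra.ι ℝ v) = ExteriorAlgebra.ι ℝ (Pperp v))
    (M : ExteriorAlgebra ℝ X) :
    LC (RC (expBlade b) M) (expBlade b) = ΛP M ∧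
    LC (expBlade b) (expBlade b * M) = ΛPperp M := by
  -- ## generic algebra facts
  have algmul : ∀ (r : ℝ) (y : ExteriorAlgebra ℝ X),
      algebraMap ℝ (ExteriorAlgebra ℝ X) r * y = r • y := fun r y => (Algebra.smul_def r y).symm
  have ianti : ∀ x y : X, ExteriorAlgebra.ι ℝ x * ExteriorAlgebra.ι ℝ y
      = -(ExteriorAlgebra.ι ℝ y * ExteriorAlgebra.ι ℝ x) := by
    intro x y
    have h := ExteriorAlgebra.ι_sq_zero (R := ℝ) (x + y)
    rw [map_add, add_mul, mul_add, mul_add, ExteriorAlgebra.ι_sq_zero,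
      ExteriorAlgebra.ι_sq_zero, zero_add, add_zero] at h
    exact eq_neg_of_add_eq_zero_left h
  have lcim : ∀ (v w : X) (N : ExteriorAlgebra ℝ X),
      lc v (ExteriorAlgebra.ι ℝ w * N) = ⟪v, w⟫ • N - ExteriorAlgebra.ι ℝ w * lc v N := by
    intro v w N
    rw [hlc_mul, hlc_vec, hginv, algmul, neg_mul, sub_eq_add_neg]
  have rcim : ∀ (v x : X) (Z : ExteriorAlgebra ℝ X),
      rc v (ExteriorAlgebra.ι ℝ x * Z) = ExteriorAlgebra.ι ℝ x * rc v Z + ⟪v, x⟫ • ginv Z := by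
    intro v x Z
    rw [hrc_mul, hrc_vec, algmul]
  -- ## the induction principle: scalars + closure under `ι v * ·` generate everything
  have LMI : ∀ (C : ExteriorAlgebra ℝ X → Prop),
      (∀ x y, C x → C y → C (x + y)) → (∀ (r : ℝ) x, C x → C (r • x)) →
      C 1 → (∀ (v : X) x, C x → C (ExteriorAlgebra.ι ℝ v * x)) → ∀ x, C x := by
    intro C hadd hsmul hone hmul x
    have key : ∀ y : ExteriorAlgebra ℝ X, ∀ z, C z → C (y * z) := by
      intro y
      induction y using ExteriorAlgebra.induction with
      | algebraMap r => intro z hz; rw [algmul]; exact hsmul r z hz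
      | ι v => intro z hz; exact hmul v z hz
      | mul a c ha hc => intro z hz; rw [mul_assoc]; exact ha _ (hc _ hz)
      | add a c ha hc => intro z hz; rw [add_mul]; exact hadd _ _ (ha _ hz) (hc _ hz)
    simpa using key x 1 hone
  -- ## sign lemmas
  have anti_blade : ∀ (l : List X) (v : X), ExteriorAlgebra.ι ℝ v * bladeL l
      = ((-1 : ℝ) ^ l.length) • (bladeL l * ExteriorAlgebra.ι ℝ v) := by
    intro l
    induction l with
    | nil => intro v; simp [bladeL_nil]
    | cons x t ih =>
      intro v
      rw [bladeL_cons, ← mul_assoc, ianti v x, neg_mul, mul_assoc, ih v, mul_smul_comm]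
      rw [List.length_cons, pow_succ, mul_smul, neg_one_smul, mul_assoc]
      simp
  have lc_blade : ∀ (u : X) (l : List X), (∀ x ∈ l, ⟪u, x⟫ = 0) →
      ∀ N, lc u (bladeL l * N) = ((-1 : ℝ) ^ l.length) • (bladeL l * lc u N) := by
    intro u l
    induction l with
    | nil => intro _ N; simp [bladeL_nil]
    | cons x t ih =>
      intro h N
      rw [bladeL_cons, mul_assoc, lcim, h x List.mem_cons_self, zero_smul, zero_sub,
        ih (fun y hy => h y (List.mem_cons_of_mem x hy)) N, mul_smul_comm]
      rw [List.length_cons, pow_succ, mul_smul, neg_one_smul, mul_assoc]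
      simp
  have hsq : ∀ n : ℕ, ((-1 : ℝ) ^ n) * ((-1 : ℝ) ^ n) = 1 := by
    intro n; rw [← pow_add, ← two_mul, pow_mul]; norm_num
  -- ## Lemma A : LC (blade l) (blade l * N) = FpL lc l N for orthonormal lists
  have lemA : ∀ l : List X, l.Pairwise (fun x y => ⟪x, y⟫ = 0) → (∀ x ∈ l, ⟪x, x⟫ = 1) →
      ∀ N, LC (bladeL l) (bladeL l * N) = FpL lc l N := by
    intro l
    induction l with
    | nil => intro _ _ N; rw [bladeL_nil, one_mul, hLC_one]; rfl
    | cons u t ih =>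
      intro hpw hunit N
      obtain ⟨hu, hpw'⟩ := List.pairwise_cons.mp hpw
      rw [bladeL_cons, mul_assoc, hLC_mul, lcim, hunit u List.mem_cons_self, one_smul,
        lc_blade u t hu N, mul_smul_comm, ← mul_assoc, anti_blade, smul_mul_assoc, smul_smul,
        hsq, one_smul, mul_assoc, ← mul_sub]
      rw [ih hpw' (fun y hy => hunit y (List.mem_cons_of_mem u hy))]
      rfl
  -- ## FpL basic lemmas
  have FpL_one : ∀ l : List X, FpL lc l 1 = 1 := by
    intro l
    induction l with
    | nil => rfl
    | cons u t ih => show FpL lc t (1 - ExteriorAlgebra.ι ℝ u * lc u 1) = 1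
                     rw [hlc_one, mul_zero, sub_zero, ih]
  have FpL_add : ∀ (l : List X) (M N), FpL lc l (M + N) = FpL lc l M + FpL lc l N := by
    intro l
    induction l with
    | nil => intro M N; rfl
    | cons u t ih =>
      intro M N
      show FpL lc t _ = _
      rw [map_add, mul_add]
      rw [show M + N - (ExteriorAlgebra.ι ℝ u * lc u M + ExteriorAlgebra.ι ℝ u * lc u N)
        = (M - ExteriorAlgebra.ι ℝ u * lc u M) + (N - ExteriorAlgebra.ι ℝ u * lc u N) by abel]
      exact ih _ _
  have FpL_smul : ∀ (l : List X) (r : ℝ) (M), FpL lc l (r • M) = r • FpL lc l M := by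
    intro l
    induction l with
    | nil => intro r M; rfl
    | cons u t ih =>
      intro r M
      show FpL lc t _ = _
      rw [map_smul, mul_smul_comm, ← smul_sub, ih]
      rfl
  -- ## the Q-lemma and FpL on `ι v * N`
  have Qlem : ∀ (u v : X) (N : ExteriorAlgebra ℝ X),
      ExteriorAlgebra.ι ℝ v * N - ExteriorAlgebra.ι ℝ u * lc u (ExteriorAlgebra.ι ℝ v * N)
      = ExteriorAlgebra.ι ℝ (v - ⟪u, v⟫ • u) * (N - ExteriorAlgebra.ι ℝ u * lc u N) := by
    intro u v N
    rw [lcim, map_sub, map_smul]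
    rw [mul_sub, mul_smul_comm, sub_mul, mul_sub, mul_sub, smul_mul_assoc, smul_mul_assoc]
    rw [← mul_assoc (ExteriorAlgebra.ι ℝ u) (ExteriorAlgebra.ι ℝ v),
      ← mul_assoc (ExteriorAlgebra.ι ℝ u) (ExteriorAlgebra.ι ℝ u),
      ExteriorAlgebra.ι_sq_zero, zero_mul, smul_zero, sub_zero, ianti u v, neg_mul, mul_assoc]
    abel
  have FpL_iota : ∀ (l : List X) (v : X) (N : ExteriorAlgebra ℝ X),
      FpL lc l (ExteriorAlgebra.ι ℝ v * N) = ExteriorAlgebra.ι ℝ (ppL l v) * FpL lc l N := by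
    intro l
    induction l with
    | nil => intro v N; rfl
    | cons u t ih =>
      intro v N
      show FpL lc t _ = _
      rw [Qlem, ih]
      rfl
  -- ## projection formulas
  have memspan : ∀ x, x ∈ Submodule.span ℝ (Set.range b) → x = ∑ i, ⟪b i, x⟫ • b i := by
    intro x hx
    refine Submodule.span_induction ?_ ?_ ?_ ?_ hx
    · rintro x ⟨j, rfl⟩
      rw [show (∑ i, ⟪b i, b j⟫ • b i) = ∑ i, (if i = j then (1:ℝ) else 0) • b i from
        Finset.sum_congr rfl fun i _ => by rw [orthonormal_iff_ite.mp hb i j]]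
      simp
    · simp
    · intro x y _ _ hx hy
      rw [show (∑ i, ⟪b i, x + y⟫ • b i) = (∑ i, ⟪b i, x⟫ • b i) + ∑ i, ⟪b i, y⟫ • b i by
        rw [← Finset.sum_add_distrib]; exact Finset.sum_congr rfl fun i _ => by
          rw [inner_add_right, add_smul]]
      rw [← hx, ← hy]
    · intro a x _ hx
      rw [show (∑ i, ⟪b i, a • x⟫ • b i) = a • ∑ i, ⟪b i, x⟫ • b i by
        rw [Finset.smul_sum]; exact Finset.sum_congr rfl fun i _ => by
          rw [real_inner_smul_right, mul_smul]]
      rw [← hx]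
  have hPb : ∀ (i : Fin p) (v : X), ⟪b i, v - P v⟫ = 0 := fun i v =>
    ((Submodule.mem_orthogonal _ _).mp (hP v).2) (b i) (Submodule.subset_span ⟨i, rfl⟩)
  have Pf : ∀ v : X, P v = ∑ i, ⟪b i, v⟫ • b i := by
    intro v
    rw [memspan _ (hP v).1]
    refine Finset.sum_congr rfl fun i _ => ?_
    have h := hPb i v
    rw [inner_sub_right] at h
    rw [show ⟪b i, P v⟫ = ⟪b i, v⟫ by linarith]
  have Ppf : ∀ v : X, Pperp v = v - ∑ i, ⟪b i, v⟫ • b i := by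
    intro v
    have h3 : ∀ i, ⟪b i, Pperp v⟫ = 0 := fun i =>
      ((Submodule.mem_orthogonal _ _).mp (hPperp v).1) (b i) (Submodule.subset_span ⟨i, rfl⟩)
    have h2 := memspan _ (hPperp v).2
    rw [show (∑ i, ⟪b i, v - Pperp v⟫ • b i) = ∑ i, ⟪b i, v⟫ • b i from
      Finset.sum_congr rfl fun i _ => by rw [inner_sub_right, h3 i, sub_zero]] at h2
    rw [← h2]; abel
  -- ## ppL formula
  have ppLf : ∀ l : List X, l.Pairwise (fun x y => ⟪x, y⟫ = 0) →
      ∀ v : X, ppL l v = v - (l.map fun u => ⟪u, v⟫ • u).sum := by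
    intro l
    induction l with
    | nil => intro _ v; simp [ppL]
    | cons u t ih =>
      intro hpw v
      obtain ⟨hu, hpw'⟩ := List.pairwise_cons.mp hpw
      show ppL t (v - ⟪u, v⟫ • u) = _
      rw [ih hpw']
      rw [show (t.map fun w => ⟪w, v - ⟪u, v⟫ • u⟫ • w) = t.map fun w => ⟪w, v⟫ • w from
        List.map_congr_left fun w hw => by
          have h0 : ⟪w, u⟫ = 0 := by rw [real_inner_comm]; exact hu w hw
          rw [inner_sub_right, real_inner_smul_right, h0, mul_zero, sub_zero]]
      rw [List.map_cons, List.sum_cons]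
      abel
  -- ## orthonormality of the list `ofFn b`
  have pw₀ : (List.ofFn b).Pairwise (fun x y => ⟪x, y⟫ = 0) :=
    List.pairwise_ofFn.mpr fun i j hij => hb.2 (ne_of_lt hij)
  have units₀ : ∀ x ∈ List.ofFn b, ⟪x, x⟫ = 1 := by
    intro x hx
    obtain ⟨i, rfl⟩ := List.mem_ofFn.mp hx
    rw [real_inner_self_eq_norm_mul_norm, hb.1 i, one_mul]
  have bladeB : expBlade b = bladeL (List.ofFn b) := by
    simp only [expBlade, bladeL, List.map_ofFn]; rfl
  have pp₀ : ∀ v : X, ppL (List.ofFn b) v = Pperp v := by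
    intro v
    rw [ppLf _ pw₀ v, Ppf v, List.map_ofFn, List.sum_ofFn]
    rfl
  -- ## GOAL 2
  have FpPP : ∀ N, FpL lc (List.ofFn b) N = ΛPperp N := by
    intro N
    refine LMI (fun N => FpL lc (List.ofFn b) N = ΛPperp N) ?_ ?_ ?_ ?_ N
    · intro x y hx hy; beta_reduce; rw [FpL_add, map_add, hx, hy]
    · intro r x hx; beta_reduce; rw [FpL_smul, map_smul, hx]
    · beta_reduce; rw [FpL_one, map_one]
    · intro v x hx; beta_reduce; rw [FpL_iota, pp₀, hx, map_mul, hΛPperp]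
  have goal2 : ∀ N, LC (expBlade b) (expBlade b * N) = ΛPperp N := by
    intro N
    rw [bladeB, lemA _ pw₀ units₀ N, FpPP]
  -- ## the contraction duality identity
  have ID : ∀ Z : ExteriorAlgebra ℝ X, ∀ (v : X) (Q : ExteriorAlgebra ℝ X),
      LC (rc v Z) Q = ExteriorAlgebra.ι ℝ v * LC Z Q - LC (ginv Z) (ExteriorAlgebra.ι ℝ v * Q) := by
    intro Z
    refine LMI (fun Z => ∀ (v : X) (Q : ExteriorAlgebra ℝ X),
      LC (rc v Z) Q = ExteriorAlgebra.ι ℝ v * LC Z Q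
        - LC (ginv Z) (ExteriorAlgebra.ι ℝ v * Q)) ?_ ?_ ?_ ?_ Z
    · intro x y hx hy v Q
      beta_reduce
      simp only [map_add, LinearMap.add_apply, hx v Q, hy v Q, mul_add]
      abel
    · intro r x hx v Q
      beta_reduce
      simp only [map_smul, LinearMap.smul_apply, hx v Q, mul_smul_comm, smul_sub]
    · intro v Q
      beta_reduce
      rw [hrc_one, map_zero, LinearMap.zero_apply, hLC_one]
      rw [show ginv 1 = 1 from map_one ginv, hLC_one, sub_self]
    · intro x Z ihZ v Q
      beta_reduce
      rw [rcim, map_add, LinearMap.add_apply, map_smul, LinearMap.smul_apply]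
      simp only [hLC_mul]
      rw [ihZ v (lc x Q)]
      rw [show ginv (ExteriorAlgebra.ι ℝ x * Z) = -(ExteriorAlgebra.ι ℝ x * ginv Z) by
        rw [map_mul, hginv, neg_mul]]
      rw [map_neg, LinearMap.neg_apply]
      simp only [hLC_mul]
      rw [lcim, map_sub, map_smul, real_inner_comm x v]
      abel
  -- ## ginv of blades
  have gblade : ∀ l : List X, ginv (bladeL l) = ((-1 : ℝ) ^ l.length) • bladeL l := by
    intro l
    induction l with
    | nil => rw [bladeL_nil, map_one]; simp
    | cons u t ih =>
      rw [bladeL_cons, map_mul, hginv, ih, List.length_cons]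
      rw [neg_mul, mul_smul_comm, ← smul_neg, pow_succ, mul_smul, neg_one_smul]
  -- ## the span of blades from `b`, and its stability
  set W : Submodule ℝ (ExteriorAlgebra ℝ X) :=
    Submodule.span ℝ {Z | ∃ s : List (Fin p), Z = bladeL (s.map b)} with hW
  have hWmul : ∀ (i : Fin p), ∀ Z ∈ W, ExteriorAlgebra.ι ℝ (b i) * Z ∈ W := by
    intro i Z hZ
    refine Submodule.span_induction ?_ ?_ ?_ ?_ hZ
    · rintro x ⟨s, rfl⟩
      exact Submodule.subset_span ⟨i :: s, by rw [List.map_cons, bladeL_cons]⟩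
    · rw [mul_zero]; exact W.zero_mem
    · intro x y _ _ hx hy; rw [mul_add]; exact W.add_mem hx hy
    · intro r x _ hx; rw [mul_smul_comm]; exact W.smul_mem r hx
  have hWrc : ∀ (v : X), ∀ Z ∈ W, rc v Z ∈ W := by
    intro v Z hZ
    refine Submodule.span_induction ?_ ?_ ?_ ?_ hZ
    · rintro x ⟨s, rfl⟩
      induction s with
      | nil => rw [List.map_nil, bladeL_nil, hrc_one]; exact W.zero_mem
      | cons i s ihs =>
        rw [List.map_cons, bladeL_cons, rcim]
        exact W.add_mem (hWmul i _ ihs) (W.smul_mem _ (by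
          rw [gblade]
          exact W.smul_mem _ (Submodule.subset_span ⟨s, rfl⟩)))
    · rw [map_zero]; exact W.zero_mem
    · intro x y _ _ hx hy; rw [map_add]; exact W.add_mem hx hy
    · intro r x _ hx; rw [map_smul]; exact W.smul_mem r hx
  have hWa : ∀ (w : X), (∀ i, ⟪w, b i⟫ = 0) → ∀ Z ∈ W, rc w Z = 0 := by
    intro w hw Z hZ
    refine Submodule.span_induction ?_ ?_ ?_ ?_ hZ
    · rintro x ⟨s, rfl⟩
      induction s with
      | nil => rw [List.map_nil, bladeL_nil, hrc_one]
      | cons i s ihs =>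
        rw [List.map_cons, bladeL_cons, rcim, ihs, mul_zero, hw i, zero_smul, add_zero]
    · rw [map_zero]
    · intro x y _ _ hx hy; rw [map_add, hx, hy, add_zero]
    · intro r x _ hx; rw [map_smul, hx, smul_zero]
  have hZW : ∀ N, RC (expBlade b) N ∈ W := by
    intro N
    refine LMI (fun N => RC (expBlade b) N ∈ W) ?_ ?_ ?_ ?_ N
    · intro x y hx hy; beta_reduce; rw [map_add]; exact W.add_mem hx hy
    · intro r x hx; beta_reduce; rw [map_smul]; exact W.smul_mem r hx
    · beta_reduce; rw [hRC_one]
      exact Submodule.subset_span ⟨List.finRange p, by rw [bladeB, List.ofFn_eq_map]⟩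
    · intro v x hx; beta_reduce; rw [hRC_mul]; exact hWrc v _ hx
  -- ## `ι x * blade l = 0` when `x ∈ l`
  have hmemblade : ∀ (l : List X) (x : X), x ∈ l → ExteriorAlgebra.ι ℝ x * bladeL l = 0 := by
    intro l
    induction l with
    | nil => intro x hx; exact absurd hx List.not_mem_nil
    | cons y t ih =>
      intro x hx
      rw [bladeL_cons, ← mul_assoc]
      rcases List.mem_cons.mp hx with h | h
      · rw [h, ExteriorAlgebra.ι_sq_zero, zero_mul]
      · rw [ianti x y, neg_mul, mul_assoc, ih x h, mul_zero, neg_zero]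
  have hPB : ∀ v : X, ExteriorAlgebra.ι ℝ (P v) * expBlade b = 0 := by
    intro v
    rw [Pf v, map_sum, Finset.sum_mul]
    refine Finset.sum_eq_zero fun i _ => ?_
    rw [map_smul, smul_mul_assoc, bladeB, hmemblade (List.ofFn b) (b i)
      (List.mem_ofFn.mpr ⟨i, rfl⟩), smul_zero]
  -- ## LC B B = 1
  have LCBB : LC (expBlade b) (expBlade b) = 1 := by
    have h := goal2 1
    rw [mul_one, map_one] at h
    exact h
  -- ## GOAL 1
  have goal1 : ∀ N, LC (RC (expBlade b) N) (expBlade b) = ΛP N := by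
    intro N
    refine LMI (fun N => LC (RC (expBlade b) N) (expBlade b) = ΛP N) ?_ ?_ ?_ ?_ N
    · intro x y hx hy
      beta_reduce
      simp only [map_add, LinearMap.add_apply, hx, hy]
    · intro r x hx
      beta_reduce
      simp only [map_smul, LinearMap.smul_apply, hx]
    · beta_reduce; rw [hRC_one, LCBB, map_one]
    · intro v x hx
      beta_reduce
      rw [hRC_mul, ID]
      have hiv : ExteriorAlgebra.ι ℝ v * expBlade b
          = ExteriorAlgebra.ι ℝ (v - P v) * expBlade b := by
        rw [map_sub, sub_mul, hPB, sub_zero]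
      have hrc0 : rc (v - P v) (RC (expBlade b) x) = 0 :=
        hWa (v - P v) (fun i => by rw [real_inner_comm]; exact hPb i v) _ (hZW x)
      have hID2 := ID (RC (expBlade b) x) (v - P v) (expBlade b)
      rw [hrc0, map_zero, LinearMap.zero_apply] at hID2
      have hg : LC (ginv (RC (expBlade b) x)) (ExteriorAlgebra.ι ℝ (v - P v) * expBlade b)
          = ExteriorAlgebra.ι ℝ (v - P v) * LC (RC (expBlade b) x) (expBlade b) := by
        rw [eq_comm, ← sub_eq_zero] at hID2 ⊢
        rw [← hID2]; abel
      rw [hiv, hg, hx, map_sub, sub_mul, map_mul, hΛP]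
      abel
  exact ⟨goal1 M, goal2 M⟩
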